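/- For every integer m ≥ 0 and every integer ℓ ≥ 1, s_{m,ℓ} = ∑_{i=0}^{m} (-1)^{m-i} · C(m+1, i+1) · r_{i,ℓ}, where C(m+1,i+1) is the binomial coefficient (an identity of integers; equivalently, over ℤ). -/

import Mathlib

/-- `IsBPA m ℓ f` : `f` encodes a barred preferential arrangement of `[ℓ]` with `m` bars.
Each element of `[ℓ]` is assigned a section (one of the `m + 1` sections determined by the
`m` bars) together with a rank inside its section (ties are allowed: elements of the same
section with the same rank form a block); within each section the set of ranks actually used
must be an initial segment `{0, …, t-1}`, so that `f` determines, for each section, an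
ordered partition of the elements assigned to it into nonempty blocks. -/
def IsBPA (m ℓ : ℕ) (f : Fin ℓ → Fin (m + 1) × Fin ℓ) : Prop :=
  ∀ x : Fin ℓ, ∀ r : Fin ℓ, r < (f x).2 → ∃ y : Fin ℓ, (f y).1 = (f x).1 ∧ (f y).2 = r

instance (m ℓ : ℕ) : DecidablePred (IsBPA m ℓ) := fun f => by unfold IsBPA; infer_instance

/-- `bpa m ℓ` : the number of barred preferential arrangements of `[ℓ]` with `m` bars.
In particular `bpa 0 ℓ` is the number of preferential arrangements of `[ℓ]`
(the Fubini / ordered Bell number `r_ℓ`). -/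
def bpa (m ℓ : ℕ) : ℕ :=
  Fintype.card { f : Fin ℓ → Fin (m + 1) × Fin ℓ // IsBPA m ℓ f }

/-- `IsSBPA m ℓ f` : `f` encodes a *special* barred preferential arrangement, i.e. a barred
preferential arrangement in which every section is nonempty. -/
def IsSBPA (m ℓ : ℕ) (f : Fin ℓ → Fin (m + 1) × Fin ℓ) : Prop :=
  IsBPA m ℓ f ∧ ∀ j : Fin (m + 1), ∃ x : Fin ℓ, (f x).1 = j

instance (m ℓ : ℕ) : DecidablePred (IsSBPA m ℓ) := fun f => by unfold IsSBPA; infer_instance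

/-- `sbpa m ℓ` : the number of special barred preferential arrangements of `[ℓ]` with `m` bars. -/
def sbpa (m ℓ : ℕ) : ℕ :=
  Fintype.card { f : Fin ℓ → Fin (m + 1) × Fin ℓ // IsSBPA m ℓ f }

open Finset

private lemma fiber_card_pos (m ℓ j : ℕ) (S : Finset (Fin (m + 1))) (hS : S.card = j + 1) :
    sbpa j ℓ = #{f ∈ (univ : Finset (Fin ℓ → Fin (m + 1) × Fin ℓ)) |
        IsBPA m ℓ f ∧ Finset.image (fun x => (f x).1) univ = S} := by
  classical
  set e := S.orderIsoOfFin hS with he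
  rw [sbpa, Fintype.card_subtype]
  apply Finset.card_bij (fun g _ => fun x => ((e (g x).1 : Fin (m + 1)), (g x).2))
  · intro g hg
    simp only [mem_filter, mem_univ, true_and] at hg ⊢
    obtain ⟨hb, hs⟩ := hg
    refine ⟨fun x r hr => ?_, ?_⟩
    · obtain ⟨y, h1, h2⟩ := hb x r hr
      exact ⟨y, by simp [h1], h2⟩
    · ext a
      simp only [mem_image, mem_univ, true_and]
      constructor
      · rintro ⟨x, rfl⟩; exact (e (g x).1).2
      · intro ha
        obtain ⟨x, hx⟩ := hs (e.symm ⟨a, ha⟩)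
        exact ⟨x, by rw [hx]; simp⟩
  · intro g1 h1 g2 h2 heq
    funext x
    have hx := congrFun heq x
    have hfst : (e (g1 x).1 : Fin (m + 1)) = (e (g2 x).1 : Fin (m + 1)) :=
      congrArg Prod.fst hx
    have hsnd := congrArg Prod.snd hx
    exact Prod.ext (e.injective (Subtype.ext hfst)) hsnd
  · intro f hf
    simp only [mem_filter, mem_univ, true_and] at hf
    obtain ⟨hb, hs⟩ := hf
    have hmem : ∀ x, (f x).1 ∈ S := fun x => by
      rw [← hs]; exact mem_image_of_mem _ (mem_univ x)
    refine ⟨fun x => (e.symm ⟨(f x).1, hmem x⟩, (f x).2), ?_, ?_⟩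
    · simp only [mem_filter, mem_univ, true_and]
      refine ⟨fun x r hr => ?_, fun k => ?_⟩
      · obtain ⟨y, hy1, hy2⟩ := hb x r hr
        exact ⟨y, congrArg e.symm (Subtype.ext hy1), hy2⟩
      · have hk : (e k : Fin (m + 1)) ∈ Finset.image (fun x => (f x).1) univ := by
          rw [hs]; exact (e k).2
        obtain ⟨x, -, hx⟩ := mem_image.1 hk
        exact ⟨x, (OrderIso.symm_apply_eq e).2 (Subtype.ext hx)⟩
    · funext x
      refine Prod.ext ?_ rfl
      simp

private lemma bpa_eq_sum (m ℓ : ℕ) (hℓ : 1 ≤ ℓ) :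
    bpa m ℓ = ∑ i ∈ range (m + 1), (m + 1).choose (i + 1) * sbpa i ℓ := by
  classical
  set G : ℕ → ℕ := fun j => if j = 0 then 0 else sbpa (j - 1) ℓ with hG
  have h1 : bpa m ℓ = #{f : Fin ℓ → Fin (m + 1) × Fin ℓ | IsBPA m ℓ f} :=
    Fintype.card_subtype _
  rw [h1, card_eq_sum_card_fiberwise
      (f := fun f : Fin ℓ → Fin (m + 1) × Fin ℓ => Finset.image (fun x => (f x).1) univ)
      (t := (univ : Finset (Fin (m + 1))).powerset)
      (fun f _ => mem_powerset.2 (subset_univ _))]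
  have h2 : ∀ S ∈ (univ : Finset (Fin (m + 1))).powerset,
      #{f ∈ {f : Fin ℓ → Fin (m + 1) × Fin ℓ | IsBPA m ℓ f} |
          Finset.image (fun x => (f x).1) univ = S} = G S.card := by
    intro S _
    rw [filter_filter]
    rcases hc : S.card with _ | j
    · have hSe : S = ∅ := card_eq_zero.1 hc
      simp only [hG, if_pos rfl]
      rw [Finset.card_eq_zero, filter_eq_empty_iff]
      intro f _
      rintro ⟨-, him⟩
      have : (f ⟨0, hℓ⟩).1 ∈ Finset.image (fun x => (f x).1) univ :=
        mem_image_of_mem _ (mem_univ _)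
      rw [him, hSe] at this
      exact absurd this (notMem_empty _)
    · simp only [hG, Nat.succ_ne_zero, if_false, Nat.add_sub_cancel]
      exact (fiber_card_pos m ℓ j S hc).symm
  rw [Finset.sum_congr rfl h2, sum_powerset_apply_card G]
  simp only [card_univ, Fintype.card_fin]
  rw [Finset.sum_range_succ']
  simp only [hG, Nat.succ_ne_zero, if_false, if_pos rfl, Nat.add_sub_cancel, smul_eq_mul,
    Nat.mul_zero, Nat.add_zero]

/-- For every `m ≥ 0` and `ℓ ≥ 1`,
`s_{m,ℓ} = ∑_{i=0}^{m} (-1)^{m-i} · C(m+1, i+1) · r_{i,ℓ}` (as integers). -/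
theorem sbpa_eq_alternating_sum (m ℓ : ℕ) (hℓ : 1 ≤ ℓ) :
    (sbpa m ℓ : ℤ) =
      ∑ i ∈ Finset.range (m + 1),
        (-1) ^ (m - i) * (Nat.choose (m + 1) (i + 1) : ℤ) * (bpa i ℓ : ℤ) := by
  classical
  have ha : ∀ i : ℕ, (bpa i ℓ : ℤ) =
      ∑ j ∈ range (i + 1), ((i + 1).choose (j + 1) : ℤ) * (sbpa j ℓ : ℤ) := by
    intro i
    rw [bpa_eq_sum i ℓ hℓ]
    push_cast
    rfl
  have key : ∀ j ∈ range (m + 1),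
      (∑ i ∈ range (m + 1), if j ≤ i then
          ((-1 : ℤ)) ^ (m - i) * ((m + 1).choose (i + 1) : ℤ) * ((i + 1).choose (j + 1) : ℤ)
        else 0)
      = if j = m then 1 else 0 := by
    intro j hj
    rw [mem_range] at hj
    have hjm : j ≤ m := by omega
    rw [Finset.sum_ite, Finset.sum_const_zero, add_zero]
    have hfil : {i ∈ range (m + 1) | j ≤ i} = Finset.Ico j (m + 1) := by
      ext i; simp [Finset.mem_Ico]; omega
    rw [hfil, Finset.sum_Ico_eq_sum_range]
    have hmj : m + 1 - j = (m - j) + 1 := by omega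
    rw [hmj]
    have hterm : ∀ k ∈ range ((m - j) + 1),
        ((-1 : ℤ)) ^ (m - (j + k)) * ((m + 1).choose (j + k + 1) : ℤ) *
            ((j + k + 1).choose (j + 1) : ℤ)
          = ((-1 : ℤ)) ^ (m - j) * ((m + 1).choose (j + 1) : ℤ) *
            ((-1 : ℤ) ^ k * ((m - j).choose k : ℤ)) := by
      intro k hk
      rw [mem_range] at hk
      have hkmj : k ≤ m - j := by omega
      have hchoose : (m + 1).choose (j + k + 1) * (j + k + 1).choose (j + 1)
          = (m + 1).choose (j + 1) * (m - j).choose k := by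
        have := Nat.choose_mul (n := m + 1) (k := j + k + 1) (s := j + 1)
          (by omega)
        simpa [show m + 1 - (j + 1) = m - j by omega,
          show j + k + 1 - (j + 1) = k by omega] using this
      have hsign : ((-1 : ℤ)) ^ (m - (j + k)) = (-1 : ℤ) ^ (m - j) * (-1 : ℤ) ^ k := by
        have h2 : m - (j + k) + k = m - j := by omega
        rw [← h2, pow_add, mul_assoc, ← pow_add, Even.neg_one_pow ⟨k, rfl⟩, mul_one]
      rw [mul_assoc, ← Int.natCast_mul, hchoose, hsign]
      push_cast
      ring
    rw [Finset.sum_congr rfl hterm, ← Finset.mul_sum, Int.alternating_sum_range_choose]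
    rcases eq_or_ne j m with rfl | hne
    · simp
    · have : m - j ≠ 0 := by omega
      simp [this, hne]
  calc (sbpa m ℓ : ℤ)
      = ∑ j ∈ range (m + 1), (if j = m then (1 : ℤ) else 0) * (sbpa j ℓ : ℤ) := by
        simp only [ite_mul, one_mul, zero_mul]
        rw [Finset.sum_ite_eq' (range (m + 1)) m (fun j => (sbpa j ℓ : ℤ))]
        simp
    _ = ∑ j ∈ range (m + 1), (∑ i ∈ range (m + 1), if j ≤ i then
          ((-1 : ℤ)) ^ (m - i) * ((m + 1).choose (i + 1) : ℤ) * ((i + 1).choose (j + 1) : ℤ)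
        else 0) * (sbpa j ℓ : ℤ) := by
        refine Finset.sum_congr rfl fun j hj => ?_
        rw [key j hj]
    _ = ∑ i ∈ range (m + 1),
        (-1) ^ (m - i) * (Nat.choose (m + 1) (i + 1) : ℤ) * (bpa i ℓ : ℤ) := by
        simp only [Finset.sum_mul, ite_mul, zero_mul]
        rw [Finset.sum_comm]
        refine Finset.sum_congr rfl fun i hi => ?_
        rw [mem_range] at hi
        rw [ha i, Finset.mul_sum]
        have hx : {j ∈ range (m + 1) | j ≤ i} = range (i + 1) := by
          ext j; simp; omega
        rw [Finset.sum_ite, Finset.sum_const_zero, add_zero, hx]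
        refine Finset.sum_congr rfl fun j hj => ?_
        ring
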